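/- arXiv:1211.2460 — 3 statements merged into one kernel-verified Lean document; each statement's English description precedes it below -/
import Mathlib

section
/- Let {A_k} be a sequence of achronal boundaries whose associated past sets P_k are increasing (P_k ⊆ P_{k+1}), and let A_∞ = ∂(⋃_k P_k) be the future achronal limit. Then: (1) every limit point of any sequence a_k ∈ A_k lies in A_∞; and (2) for every a ∈ A_∞ and every inextendible future-directed timelike curve α through a, for all sufficiently large k the curve α meets A_k in a unique point a_k, the sequence {a_k} is future increasing (a_k ≤ a_{k+1} in the causal order), and a_k → a. -/
open Set Filter Topology

/-- An abstract spacetime: a topological space equipped with a chronological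
relation `ll` (`≪`), a causal relation `le` (`≤`) and a Lorentzian distance
function `d`, satisfying the standard causal-theoretic axioms. -/
structure Spacetime (M : Type*) [TopologicalSpace M] where
  ll : M → M → Prop
  le : M → M → Prop
  d : M → M → ℝ
  ll_trans : ∀ {x y z}, ll x y → ll y z → ll x z
  le_refl : ∀ x, le x x
  le_trans : ∀ {x y z}, le x y → le y z → le x z
  ll_imp_le : ∀ {x y}, ll x y → le x y
  ll_le : ∀ {x y z}, ll x y → le y z → ll x z
  le_ll : ∀ {x y z}, le x y → ll y z → ll x z
  isOpen_ll : IsOpen {p : M × M | ll p.1 p.2}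
  d_nonneg : ∀ x y, 0 ≤ d x y
  d_zero_of_not_le : ∀ {x y}, ¬ le x y → d x y = 0

variable {M : Type*} [TopologicalSpace M]

/-- Chronological future `I⁺(S)`. -/
def Spacetime.Iplus (st : Spacetime M) (S : Set M) : Set M := {y | ∃ x ∈ S, st.ll x y}
/-- Chronological past `I⁻(S)`. -/
def Spacetime.Iminus (st : Spacetime M) (S : Set M) : Set M := {y | ∃ x ∈ S, st.ll y x}
/-- Causal future `J⁺(S)`. -/
def Spacetime.Jplus (st : Spacetime M) (S : Set M) : Set M := {y | ∃ x ∈ S, st.le x y}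
/-- Causal past `J⁻(S)`. -/
def Spacetime.Jminus (st : Spacetime M) (S : Set M) : Set M := {y | ∃ x ∈ S, st.le y x}

/-- A future set: `I⁺(F) = F`. -/
def Spacetime.IsFutureSet (st : Spacetime M) (F : Set M) : Prop := st.Iplus F = F
/-- A past set: `I⁻(P) = P`. -/
def Spacetime.IsPastSet (st : Spacetime M) (P : Set M) : Prop := st.Iminus P = P

/-- An achronal boundary: a nonempty boundary of a future set or of a past set. -/
def Spacetime.IsAchronalBoundary (st : Spacetime M) (A : Set M) : Prop :=
  A.Nonempty ∧ ((∃ F, st.IsFutureSet F ∧ A = frontier F) ∨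
                (∃ P, st.IsPastSet P ∧ A = frontier P))

def Spacetime.IsAchronal (st : Spacetime M) (S : Set M) : Prop :=
  ∀ x ∈ S, ∀ y ∈ S, ¬ st.ll x y

def Spacetime.IsAcausal (st : Spacetime M) (S : Set M) : Prop :=
  ∀ x ∈ S, ∀ y ∈ S, st.le x y → x = y

/-- A (continuous) future-directed timelike curve defined on `I`. -/
def Spacetime.IsTimelikeCurveOn (st : Spacetime M) (γ : ℝ → M) (I : Set ℝ) : Prop :=
  ContinuousOn γ I ∧ ∀ s ∈ I, ∀ t ∈ I, s < t → st.ll (γ s) (γ t)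

/-- A (continuous) future-directed causal curve defined on `I`. -/
def Spacetime.IsCausalCurveOn (st : Spacetime M) (γ : ℝ → M) (I : Set ℝ) : Prop :=
  ContinuousOn γ I ∧ ∀ s ∈ I, ∀ t ∈ I, s ≤ t → st.le (γ s) (γ t)

/-- Future inextendibility of a curve parameterized towards `+∞`. -/
def FutureInext (γ : ℝ → M) : Prop := ¬ ∃ p : M, Tendsto γ atTop (𝓝 p)
/-- Past inextendibility of a curve parameterized towards `-∞`. -/
def PastInext (γ : ℝ → M) : Prop := ¬ ∃ p : M, Tendsto γ atBot (𝓝 p)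

/-- An inextendible future-directed causal curve (parameterized over all of `ℝ`). -/
def Spacetime.IsInextCausalCurve (st : Spacetime M) (γ : ℝ → M) : Prop :=
  st.IsCausalCurveOn γ Set.univ ∧ FutureInext γ ∧ PastInext γ

/-- A Cauchy surface: an achronal set met by every inextendible causal curve. -/
def Spacetime.IsCauchySurface (st : Spacetime M) (S : Set M) : Prop :=
  st.IsAchronal S ∧ ∀ γ : ℝ → M, st.IsInextCausalCurve γ → ∃ t, γ t ∈ S

/-- `S` is future causally complete: for every `p ∈ J⁺(S)` the closure in `S`
of `J⁻(p) ∩ S` is compact. -/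
def Spacetime.FutureCausallyComplete (st : Spacetime M) (S : Set M) : Prop :=
  ∀ p ∈ st.Jplus S, IsCompact (closure (st.Jminus {p} ∩ S) ∩ S)

/-- `S` is past causally complete: for every `p ∈ J⁻(S)` the closure in `S`
of `J⁺(p) ∩ S` is compact. -/
def Spacetime.PastCausallyComplete (st : Spacetime M) (S : Set M) : Prop :=
  ∀ p ∈ st.Jminus S, IsCompact (closure (st.Jplus {p} ∩ S) ∩ S)

/-- `x` is an edge point of the achronal set `S`. -/
def Spacetime.EdgePoint (st : Spacetime M) (S : Set M) (x : M) : Prop :=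
  x ∈ closure S ∧ ∀ U ∈ 𝓝 x, ∃ γ : ℝ → M,
    st.IsTimelikeCurveOn γ (Set.Icc 0 1) ∧
    (∀ t ∈ Set.Icc (0:ℝ) 1, γ t ∈ U ∧ γ t ∉ S) ∧
    st.ll (γ 0) x ∧ st.ll x (γ 1)

/-- `S` is edgeless. -/
def Spacetime.Edgeless (st : Spacetime M) (S : Set M) : Prop :=
  ∀ x, ¬ st.EdgePoint S x

/-- The past domain of dependence `D⁻(S)`: points from which every
future-inextendible causal curve meets `S`. -/
def Spacetime.PastDomain (st : Spacetime M) (S : Set M) : Set M :=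
  {p | ∀ γ : ℝ → M, st.IsCausalCurveOn γ (Set.Ici 0) → γ 0 = p → FutureInext γ →
        ∃ t ∈ Set.Ici (0:ℝ), γ t ∈ S}

/-- The past Cauchy horizon `H⁻(S) = closure D⁻(S) \ I⁺(D⁻(S))`. -/
def Spacetime.PastHorizon (st : Spacetime M) (S : Set M) : Set M :=
  {p | p ∈ closure (st.PastDomain S) ∧ ∀ q, st.ll q p → q ∉ st.PastDomain S}

/-- Lorentzian distance from the set `S` to the point `q`:  `d(S,q) = sup_{x∈S} d(x,q)`. -/
noncomputable def distFrom (d : M → M → ℝ) (S : Set M) (q : M) : ℝ :=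
  sSup ((fun x => d x q) '' S)

/-- Lorentzian distance from the point `q` to the set `C`:  `d(q,C) = sup_{y∈C} d(q,y)`. -/
noncomputable def distTo (d : M → M → ℝ) (q : M) (C : Set M) : ℝ :=
  sSup ((fun y => d q y) '' C)

/-- Lorentzian distance between the sets `A` and `B`: `sup_{a∈A,b∈B} d(a,b)`. -/
noncomputable def distBetween (d : M → M → ℝ) (A B : Set M) : ℝ :=
  sSup (Set.image2 d A B)

/-- The past sphere `S⁻_r(C) = {x : d(x,C) = r}`. -/
def pastSphere (d : M → M → ℝ) (r : ℝ) (C : Set M) : Set M := {x | distTo d x C = r}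

/-- The future sphere `S⁺_r(S) = {x : d(S,x) = r}`. -/
def futureSphere (d : M → M → ℝ) (r : ℝ) (S : Set M) : Set M := {x | distFrom d S x = r}

/-- A globally hyperbolic spacetime: the causal relation is a closed partial
order, causal diamonds are compact, the Lorentzian distance is finite-valued,
continuous, positive exactly on chronologically related pairs, satisfies the
reverse triangle inequality, and causally related points are joined by
maximal causal geodesic segments. -/
structure GloballyHyperbolic (M : Type*) [TopologicalSpace M] extends Spacetime M where
  le_antisymm : ∀ {x y}, le x y → le y x → x = y
  isClosed_le : IsClosed {p : M × M | le p.1 p.2}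
  compact_diamonds : ∀ p q : M, IsCompact {x | le p x ∧ le x q}
  d_cont : Continuous fun p : M × M => d p.1 p.2
  d_pos_iff : ∀ x y, 0 < d x y ↔ ll x y
  rev_triangle : ∀ {x y z}, le x y → le y z → d x y + d y z ≤ d x z
  max_geodesic : ∀ x y, le x y → ∃ γ : ℝ → M,
    γ 0 = x ∧ γ 1 = y ∧ ContinuousOn γ (Set.Icc 0 1) ∧
    (∀ s ∈ Set.Icc (0:ℝ) 1, ∀ t ∈ Set.Icc (0:ℝ) 1, s ≤ t → le (γ s) (γ t)) ∧
    (∀ s ∈ Set.Icc (0:ℝ) 1, ∀ t ∈ Set.Icc (0:ℝ) 1, ∀ u ∈ Set.Icc (0:ℝ) 1,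
      s ≤ t → t ≤ u → d (γ s) (γ u) = d (γ s) (γ t) + d (γ t) (γ u))

/-- A future `S`-ray: a future-inextendible causal curve from a point of `S`,
each of whose initial segments is a maximal `S`-segment (maximality being
encoded by additivity of the Lorentzian distance along the curve and by
`L(γ|[0,t]) = d(γ 0, γ t) = d(S, γ t)`). -/
def Spacetime.IsFutureSRay (st : Spacetime M) (S : Set M) (γ : ℝ → M) : Prop :=
  γ 0 ∈ S ∧ st.IsCausalCurveOn γ (Set.Ici 0) ∧ FutureInext γ ∧
  (∀ t ∈ Set.Ici (0:ℝ), st.d (γ 0) (γ t) = distFrom st.d S (γ t)) ∧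
  (∀ s ∈ Set.Ici (0:ℝ), ∀ t ∈ Set.Ici (0:ℝ), ∀ u ∈ Set.Ici (0:ℝ), s ≤ t → t ≤ u →
    st.d (γ s) (γ u) = st.d (γ s) (γ t) + st.d (γ t) (γ u))

/-- A timelike future `S`-ray. -/
def Spacetime.IsTimelikeFutureSRay (st : Spacetime M) (S : Set M) (γ : ℝ → M) : Prop :=
  st.IsFutureSRay S γ ∧
  ∀ s ∈ Set.Ici (0:ℝ), ∀ t ∈ Set.Ici (0:ℝ), s < t → st.ll (γ s) (γ t)

/-- A past timelike `S`-ray (parameterized so that `t → ∞` goes to the past). -/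
def Spacetime.IsTimelikePastSRay (st : Spacetime M) (S : Set M) (γ : ℝ → M) : Prop :=
  γ 0 ∈ S ∧ ContinuousOn γ (Set.Ici 0) ∧
  (∀ s ∈ Set.Ici (0:ℝ), ∀ t ∈ Set.Ici (0:ℝ), s < t → st.ll (γ t) (γ s)) ∧
  FutureInext γ ∧
  (∀ t ∈ Set.Ici (0:ℝ), st.d (γ t) (γ 0) = distTo st.d (γ t) S) ∧
  (∀ s ∈ Set.Ici (0:ℝ), ∀ t ∈ Set.Ici (0:ℝ), ∀ u ∈ Set.Ici (0:ℝ), s ≤ t → t ≤ u →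
    st.d (γ u) (γ s) = st.d (γ u) (γ t) + st.d (γ t) (γ s))

/-- A future-complete unit speed timelike `S`-ray `γ : [0,∞) → M`. -/
def GloballyHyperbolic.IsUnitTimelikeSRay (gh : GloballyHyperbolic M) (S : Set M)
    (γ : ℝ → M) : Prop :=
  γ 0 ∈ S ∧ ContinuousOn γ (Set.Ici 0) ∧
  (∀ s ∈ Set.Ici (0:ℝ), ∀ t ∈ Set.Ici (0:ℝ), s < t → gh.ll (γ s) (γ t)) ∧
  (∀ s ∈ Set.Ici (0:ℝ), ∀ t ∈ Set.Ici (0:ℝ), s ≤ t → gh.d (γ s) (γ t) = t - s) ∧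
  (∀ t ∈ Set.Ici (0:ℝ), distFrom gh.d S (γ t) = gh.d (γ 0) (γ t)) ∧
  FutureInext γ

/-- A timelike geodesic, encoded as a locally maximal unit-speed timelike curve. -/
def Spacetime.IsTimelikeGeodesicOn (st : Spacetime M) (γ : ℝ → M) (I : Set ℝ) : Prop :=
  ContinuousOn γ I ∧ (∀ s ∈ I, ∀ t ∈ I, s < t → st.ll (γ s) (γ t)) ∧
  ∀ t ∈ I, ∃ ε > 0, ∀ s₁ ∈ I ∩ Set.Icc (t-ε) (t+ε), ∀ s₂ ∈ I ∩ Set.Icc (t-ε) (t+ε),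
    s₁ ≤ s₂ → st.d (γ s₁) (γ s₂) = s₂ - s₁

/-- Future timelike geodesic completeness: every future-directed timelike
geodesic segment extends to infinite affine parameter. -/
def Spacetime.FutureTimelikeComplete (st : Spacetime M) : Prop :=
  ∀ (γ : ℝ → M) (a b : ℝ), a < b → st.IsTimelikeGeodesicOn γ (Set.Icc a b) →
    ∃ γ' : ℝ → M, Set.EqOn γ' γ (Set.Icc a b) ∧ st.IsTimelikeGeodesicOn γ' (Set.Ici a)

/-- Past timelike geodesic completeness. -/
def Spacetime.PastTimelikeComplete (st : Spacetime M) : Prop :=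
  ∀ (γ : ℝ → M) (a b : ℝ), a < b → st.IsTimelikeGeodesicOn γ (Set.Icc a b) →
    ∃ γ' : ℝ → M, Set.EqOn γ' γ (Set.Icc a b) ∧ st.IsTimelikeGeodesicOn γ' (Set.Iic b)

/-- A generalized past horosphere: the achronal limit of a monotonic sequence
of past spheres `S⁻_{r_k}(C_k)` with radii `r_k → ∞`. -/
def GloballyHyperbolic.IsPastHorosphere (gh : GloballyHyperbolic M) (Sinf : Set M) : Prop :=
  ∃ (C : ℕ → Set M) (r : ℕ → ℝ),
    (∀ k, gh.toSpacetime.PastCausallyComplete (C k)) ∧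
    (∀ k, 0 < r k) ∧ Tendsto r atTop atTop ∧
    (∀ k, (pastSphere gh.d (r k) (C k)).Nonempty) ∧
    (((∀ k, pastSphere gh.d (r k) (C k) ⊆
          gh.toSpacetime.Jminus (pastSphere gh.d (r (k+1)) (C (k+1)))) ∧
        Sinf = frontier (⋃ k, gh.toSpacetime.Iminus (pastSphere gh.d (r k) (C k)))) ∨
     ((∀ k, pastSphere gh.d (r (k+1)) (C (k+1)) ⊆
          gh.toSpacetime.Jminus (pastSphere gh.d (r k) (C k))) ∧
        Sinf = frontier (⋂ k, gh.toSpacetime.Jminus (pastSphere gh.d (r k) (C k)))))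

lemma Spacetime.isOpen_Iminus' (st : Spacetime M) (S : Set M) : IsOpen (st.Iminus S) := by
  have h : st.Iminus S = ⋃ x ∈ S, {y | st.ll y x} := by
    ext y; simp [Spacetime.Iminus]
  rw [h]
  refine isOpen_biUnion fun x _ => ?_
  have h2 : {y | st.ll y x} = (fun y => (y, x)) ⁻¹' {p : M × M | st.ll p.1 p.2} := rfl
  rw [h2]
  exact st.isOpen_ll.preimage (continuous_id.prodMk continuous_const)

lemma Spacetime.isOpen_of_isPastSet (st : Spacetime M) {P : Set M}
    (h : st.IsPastSet P) : IsOpen P := h ▸ st.isOpen_Iminus' P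

lemma Spacetime.mem_of_ll_closure (st : Spacetime M) {P : Set M}
    (h : st.IsPastSet P) {x y : M} (hy : y ∈ closure P) (hxy : st.ll x y) : x ∈ P := by
  have hopen : IsOpen {z | st.ll x z} := by
    have h2 : {z | st.ll x z} = (fun z => (x, z)) ⁻¹' {p : M × M | st.ll p.1 p.2} := rfl
    rw [h2]; exact st.isOpen_ll.preimage (continuous_const.prodMk continuous_id)
  obtain ⟨p, hp1, hp2⟩ := mem_closure_iff.mp hy _ hopen hxy
  rw [← h]; exact ⟨p, hp2, hp1⟩

/-- Sequential characterization of (future) achronal limits. -/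
theorem sequential_characterization_of_achronal_limits
    {M : Type*} [TopologicalSpace M] (st : Spacetime M)
    (P : ℕ → Set M) (hP : ∀ k, st.IsPastSet (P k))
    (hne : ∀ k, (frontier (P k)).Nonempty)
    (hmono : ∀ k, P k ⊆ P (k+1))
    (Ainf : Set M) (hAinf : Ainf = frontier (⋃ k, P k)) :
    (∀ (a : M) (ak : ℕ → M), (∀ k, ak k ∈ frontier (P k)) →
        MapClusterPt a atTop ak → a ∈ Ainf) ∧
    (∀ a ∈ Ainf, ∀ (α : ℝ → M) (t0 : ℝ), α t0 = a →
        st.IsTimelikeCurveOn α Set.univ → FutureInext α → PastInext α →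
        ∃ (K : ℕ) (tk : ℕ → ℝ),
          (∀ k ≥ K, α (tk k) ∈ frontier (P k) ∧ ∀ t, α t ∈ frontier (P k) → t = tk k) ∧
          (∀ k ≥ K, st.le (α (tk k)) (α (tk (k+1)))) ∧
          Tendsto (fun k => α (tk k)) atTop (𝓝 a)) := by
  have hPopen : ∀ k, IsOpen (P k) := fun k => st.isOpen_of_isPastSet (hP k)
  have hmonoP : Monotone P := monotone_nat_of_le_succ hmono
  set U : Set M := ⋃ k, P k with hU
  have hUopen : IsOpen U := isOpen_iUnion fun k => hPopen k
  have hUpast : st.IsPastSet U := by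
    apply Subset.antisymm
    · rintro y ⟨x, hx, hyx⟩
      obtain ⟨k, hk⟩ := mem_iUnion.mp hx
      exact mem_iUnion.mpr ⟨k, (hP k) ▸ ⟨x, hk, hyx⟩⟩
    · rintro y hy
      obtain ⟨k, hk⟩ := mem_iUnion.mp hy
      rw [← hP k] at hk
      obtain ⟨x, hx, hyx⟩ := hk
      exact ⟨x, mem_iUnion.mpr ⟨k, hx⟩, hyx⟩
  constructor
  · -- Part 1
    intro a ak hak hcl
    rw [hAinf, hUopen.frontier_eq]
    constructor
    · -- a ∈ closure U
      have hmem : ∀ k, ak k ∈ closure U := fun k =>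
        closure_mono (subset_iUnion P k) (frontier_subset_closure (hak k))
      have hle : map ak atTop ≤ 𝓟 (closure U) := by
        rw [le_principal_iff, mem_map]
        exact Eventually.of_forall hmem
      have hcp : ClusterPt a (map ak atTop) := hcl
      have : ClusterPt a (𝓟 (closure U)) := hcp.mono hle
      simpa using mem_closure_iff_clusterPt.mpr this
    · -- a ∉ U
      intro haU
      obtain ⟨j, haj⟩ := mem_iUnion.mp haU
      rw [← hP j] at haj
      obtain ⟨x, hxP, hax⟩ := haj
      have hopen : IsOpen {y | st.ll y x} := by
        have h2 : {y | st.ll y x} = (fun y => (y, x)) ⁻¹' {p : M × M | st.ll p.1 p.2} := rfl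
        rw [h2]; exact st.isOpen_ll.preimage (continuous_id.prodMk continuous_const)
      have hfreq := (mapClusterPt_iff_frequently.mp hcl) _ (hopen.mem_nhds hax)
      obtain ⟨k, hk, hkj⟩ := (hfreq.and_eventually (eventually_ge_atTop j)).exists
      have hxk : x ∈ P k := hmonoP hkj hxP
      have : ak k ∈ P k := by rw [← hP k]; exact ⟨x, hxk, hk⟩
      have hfr := (hPopen k).frontier_eq ▸ hak k
      exact hfr.2 this
  · -- Part 2
    intro a ha α t0 hat0 hα _ _
    have hαc : Continuous α := continuousOn_univ.mp hα.1
    have hll : ∀ s t : ℝ, s < t → st.ll (α s) (α t) :=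
      fun s t h => hα.2 s trivial t trivial h
    rw [hAinf, hUopen.frontier_eq] at ha
    have haclU : a ∈ closure U := ha.1
    have hanU : a ∉ U := ha.2
    have hpast : ∀ t < t0, α t ∈ U := fun t ht =>
      st.mem_of_ll_closure hUpast (hat0 ▸ haclU) (hat0 ▸ hll t t0 ht)
    obtain ⟨K, hKmem⟩ := mem_iUnion.mp (hpast (t0 - 1) (by linarith)) -- α (t0-1) ∈ P K
    -- times where the curve is in P k
    set T : ℕ → Set ℝ := fun k => {t | α t ∈ P k} with hTdef
    have hTlt : ∀ k, ∀ t ∈ T k, t < t0 := by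
      intro k t ht
      rcases lt_trichotomy t t0 with h | h | h
      · exact h
      · exact absurd (h ▸ ht : α t0 ∈ P k) (fun hc => hanU (hat0 ▸ mem_iUnion.mpr ⟨k, hc⟩))
      · exfalso
        have : α t0 ∈ P k := by
          rw [← hP k]; exact ⟨α t, ht, hll t0 t h⟩
        exact hanU (hat0 ▸ mem_iUnion.mpr ⟨k, this⟩)
    have hTbdd : ∀ k, BddAbove (T k) := fun k =>
      (bddAbove_Iio (a := t0)).mono (fun t ht => hTlt k t ht)
    have hTdown : ∀ k, ∀ s t : ℝ, s < t → t ∈ T k → s ∈ T k := by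
      intro k s t hst ht
      show α s ∈ P k
      rw [← hP k]; exact ⟨α t, ht, hll s t hst⟩
    have hTmono : ∀ j k, j ≤ k → T j ⊆ T k := fun j k hjk t ht => hmonoP hjk ht
    have hTne : ∀ k, K ≤ k → (t0 - 1) ∈ T k := fun k hk => hmonoP hk hKmem
    -- crossing times
    set tk : ℕ → ℝ := fun k => sSup (T (max k K)) with htk
    have htkub : ∀ k, tk k ≤ t0 := fun k =>
      csSup_le ⟨t0 - 1, hTne _ (le_max_right k K)⟩
        (fun t ht => le_of_lt (hTlt _ t ht))
    have htkdown : ∀ k, ∀ s : ℝ, s < tk k → s ∈ T (max k K) := by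
      intro k s hs
      obtain ⟨t, htT, hst⟩ :=
        exists_lt_of_lt_csSup ⟨t0 - 1, hTne _ (le_max_right k K)⟩ hs
      exact hTdown _ s t hst htT
    have htkcl : ∀ k, α (tk k) ∈ closure (P (max k K)) := by
      intro k
      have h1 : tk k ∈ closure (Iio (tk k)) := by
        rw [closure_Iio]; exact self_mem_Iic
      have h2 : α (tk k) ∈ α '' closure (Iio (tk k)) := mem_image_of_mem α h1
      have h3 : α '' closure (Iio (tk k)) ⊆ closure (α '' Iio (tk k)) :=
        image_closure_subset_closure_image hαc
      refine closure_mono ?_ (h3 h2)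
      rintro y ⟨s, hs, rfl⟩
      exact htkdown k s hs
    have htknot : ∀ k, α (tk k) ∉ P (max k K) := by
      intro k hc
      have hTopen : IsOpen (T (max k K)) := (hPopen _).preimage hαc
      obtain ⟨ε, hε, hball⟩ := Metric.isOpen_iff.mp hTopen (tk k) hc
      have hmem : tk k + ε / 2 ∈ T (max k K) := by
        apply hball
        simp [Real.dist_eq, abs_of_nonneg, hε.le]
        linarith
      have := le_csSup (hTbdd _) hmem
      linarith
    have htkfr : ∀ k, α (tk k) ∈ frontier (P (max k K)) := by
      intro k
      rw [(hPopen _).frontier_eq]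
      exact ⟨htkcl k, htknot k⟩
    refine ⟨K, tk, ?_, ?_, ?_⟩
    · -- membership and uniqueness
      intro k hk
      have hmax : max k K = k := max_eq_left hk
      constructor
      · have := htkfr k; rwa [hmax] at this
      · intro t ht
        rw [(hPopen k).frontier_eq] at ht
        rcases lt_trichotomy t (tk k) with h | h | h
        · exfalso
          have : t ∈ T (max k K) := htkdown k t h
          rw [hmax] at this
          exact ht.2 this
        · exact h
        · exfalso
          have h1 : st.ll (α (tk k)) (α t) := hll _ _ h
          have h2 : α (tk k) ∈ P k := st.mem_of_ll_closure (hP k) ht.1 h1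
          have := htknot k
          rw [hmax] at this
          exact this h2
    · -- causal monotonicity
      intro k hk
      have hle : tk k ≤ tk (k + 1) :=
        csSup_le_csSup (hTbdd _) ⟨t0 - 1, hTne _ (le_max_right k K)⟩
          (hTmono _ _ (max_le_max (Nat.le_succ k) le_rfl))
      rcases eq_or_lt_of_le hle with h | h
      · rw [h]; exact st.le_refl _
      · exact st.ll_imp_le (hll _ _ h)
    · -- convergence
      have htend : Tendsto tk atTop (𝓝 t0) := by
        rw [tendsto_order]
        constructor
        · intro b hb
          set s : ℝ := (max b (t0 - 1) + t0) / 2 with hs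
          have hmax_lt : max b (t0 - 1) < t0 := by
            rcases max_cases b (t0 - 1) with ⟨h1, _⟩ | ⟨h1, _⟩ <;> rw [h1] <;> linarith
          have hbs : b < s := by
            have : b ≤ max b (t0 - 1) := le_max_left _ _
            have : max b (t0 - 1) < s := by rw [hs]; linarith
            linarith [le_max_left b (t0 - 1)]
          have hst0 : s < t0 := by rw [hs]; linarith
          obtain ⟨j, hj⟩ := mem_iUnion.mp (hpast s hst0)
          filter_upwards [eventually_ge_atTop j] with k hkj
          have : s ∈ T (max k K) := hmonoP (le_trans hkj (le_max_left k K)) hj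
          have := le_csSup (hTbdd _) this
          linarith
        · intro b hb
          filter_upwards with k
          exact lt_of_le_of_lt (htkub k) hb
      have := (hαc.tendsto t0).comp htend
      rwa [hat0] at this
end

section
/- Let M be a globally hyperbolic spacetime and C ⊆ M past causally complete. Then for all r, a > 0, the past spheres satisfy the additivity S⁻_a(S⁻_r(C)) = S⁻_{r+a}(C). Consequently, for s > r > 0 with S⁻_s(C) nonempty, d(S⁻_s(C), S⁻_r(C)) = s − r. -/
open Set Filter Topology

variable {M : Type*} [TopologicalSpace M]

section Helpers

lemma sSup_ne_zero_aux {S : Set ℝ} {a : ℝ} (h : sSup S = a) (ha : a ≠ 0) :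
    S.Nonempty ∧ BddAbove S := by
  constructor
  · by_contra hne
    rw [Set.not_nonempty_iff_eq_empty] at hne
    rw [hne, Real.sSup_empty] at h
    exact ha h.symm
  · by_contra hb
    rw [Real.sSup_of_not_bddAbove hb] at h
    exact ha h.symm

lemma distTo_eq (d : M → M → ℝ) (x : M) (C : Set M) :
    distTo d x C = sSup ((fun y => d x y) '' C) := rfl

lemma d_self_zero (gh : GloballyHyperbolic M) (x : M) : gh.d x x = 0 := by
  have h := gh.rev_triangle (gh.le_refl x) (gh.le_refl x)
  have h2 := gh.d_nonneg x x
  linarith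

/-- Attainment of the distance supremum, using past causal completeness. -/
lemma exists_dist_max (gh : GloballyHyperbolic M) {C : Set M}
    (hC : gh.toSpacetime.PastCausallyComplete C) {x y : M}
    (hy : y ∈ C) (hxy : gh.le x y) :
    ∃ y₀ ∈ C, ∀ z ∈ C, gh.d x z ≤ gh.d x y₀ := by
  have hxJ : x ∈ gh.toSpacetime.Jminus C := ⟨y, hy, hxy⟩
  have hK := hC x hxJ
  have hKne : (closure (gh.toSpacetime.Jplus {x} ∩ C) ∩ C).Nonempty :=
    ⟨y, subset_closure ⟨⟨x, rfl, hxy⟩, hy⟩, hy⟩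
  have hcont : ContinuousOn (fun z => gh.d x z)
      (closure (gh.toSpacetime.Jplus {x} ∩ C) ∩ C) :=
    (gh.d_cont.comp (continuous_const.prodMk continuous_id)).continuousOn
  obtain ⟨y₀, hy₀K, hmax⟩ := hK.exists_isMaxOn hKne hcont
  refine ⟨y₀, hy₀K.2, fun z hz => ?_⟩
  by_cases hle : gh.le x z
  · exact hmax ⟨subset_closure ⟨⟨x, rfl, hle⟩, hz⟩, hz⟩
  · rw [gh.toSpacetime.d_zero_of_not_le hle]
    exact gh.d_nonneg x y₀

/-- Reverse-triangle chaining through a past sphere. -/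
lemma chain_bound (gh : GloballyHyperbolic M) {C : Set M} {x w : M} {r B : ℝ}
    (hr : 0 < r) (hw : w ∈ pastSphere gh.d r C) (hxw : 0 < gh.d x w)
    (hB : ∀ y ∈ C, gh.d x y ≤ B) :
    gh.d x w + r ≤ B := by
  by_contra hcon
  push_neg at hcon
  have hw' : sSup ((fun y => gh.d w y) '' C) = r := hw
  obtain ⟨hne, _⟩ := sSup_ne_zero_aux hw' hr.ne'
  set δ := min r (gh.d x w + r - B) / 2 with hδdef
  have hδpos : 0 < δ := by
    have h1 : 0 < min r (gh.d x w + r - B) := lt_min hr (by linarith)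
    positivity
  have hδr : δ < r := by
    have := min_le_left r (gh.d x w + r - B)
    rw [hδdef]; linarith
  have hδ2 : 2 * δ ≤ gh.d x w + r - B := by
    have := min_le_right r (gh.d x w + r - B)
    rw [hδdef]; linarith
  obtain ⟨v, hv, hlt⟩ := exists_lt_of_lt_csSup hne (by rw [hw']; linarith : r - δ < sSup ((fun y => gh.d w y) '' C))
  obtain ⟨y, hyC, rfl⟩ := hv
  have hwy : gh.ll w y := (gh.d_pos_iff w y).1 (by linarith)
  have hxw' : gh.ll x w := (gh.d_pos_iff x w).1 hxw
  have htri := gh.rev_triangle (gh.ll_imp_le hxw') (gh.ll_imp_le hwy)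
  have hBy := hB y hyC
  linarith

/-- Step down along a maximizing geodesic: from a point at distance `≥ r` from
`C` one finds a point on the past sphere `S⁻_r(C)` at the right distance. -/
lemma step_down (gh : GloballyHyperbolic M) {C : Set M}
    (hC : gh.toSpacetime.PastCausallyComplete C) {x : M} {r : ℝ}
    (hr : 0 < r) (hrs : r ≤ distTo gh.d x C) :
    ∃ z, z ∈ pastSphere gh.d r C ∧ gh.d x z = distTo gh.d x C - r := by
  have hseq : distTo gh.d x C = sSup ((fun y => gh.d x y) '' C) := rfl
  have hspos : 0 < distTo gh.d x C := lt_of_lt_of_le hr hrs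
  obtain ⟨hne, hbdd⟩ := sSup_ne_zero_aux hseq.symm hspos.ne'
  obtain ⟨v, hv, hvpos⟩ := exists_lt_of_lt_csSup hne (by rw [← hseq]; exact hspos)
  obtain ⟨y, hyC, rfl⟩ := hv
  have hlexy : gh.le x y := gh.ll_imp_le ((gh.d_pos_iff x y).1 hvpos)
  obtain ⟨y₀, hy₀C, hmax⟩ := exists_dist_max gh hC hyC hlexy
  have hy₀eq : distTo gh.d x C = gh.d x y₀ := by
    rw [hseq]
    refine le_antisymm (csSup_le hne ?_) (le_csSup hbdd ⟨y₀, hy₀C, rfl⟩)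
    rintro v ⟨z, hzC, rfl⟩
    exact hmax z hzC
  have hlexy₀ : gh.le x y₀ := gh.ll_imp_le ((gh.d_pos_iff x y₀).1 (by rw [← hy₀eq]; exact hspos))
  obtain ⟨γ, hγ0, hγ1, hγc, hγle, hγadd⟩ := gh.max_geodesic x y₀ hlexy₀
  have hfc : ContinuousOn (fun t => gh.d (γ t) y₀) (Set.Icc 0 1) :=
    gh.d_cont.comp_continuousOn (hγc.prodMk continuousOn_const)
  have hmemr : r ∈ Set.Icc ((fun t => gh.d (γ t) y₀) 1) ((fun t => gh.d (γ t) y₀) 0) := by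
    simp only [Set.mem_Icc]
    rw [hγ0, hγ1, d_self_zero]
    exact ⟨hr.le, by rw [← hy₀eq]; exact hrs⟩
  obtain ⟨t, ht, hft⟩ := intermediate_value_Icc' (by norm_num : (0:ℝ) ≤ 1) hfc hmemr
  have h01 : (0:ℝ) ∈ Set.Icc (0:ℝ) 1 := ⟨le_refl 0, by norm_num⟩
  have h11 : (1:ℝ) ∈ Set.Icc (0:ℝ) 1 := ⟨by norm_num, le_refl 1⟩
  have hadd := hγadd 0 h01 t ht 1 h11 ht.1 ht.2
  rw [hγ0, hγ1] at hadd
  simp only at hft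
  have hxz : gh.d x (γ t) = distTo gh.d x C - r := by
    rw [hy₀eq]; rw [hft] at hadd; linarith
  have hlexz : gh.le x (γ t) := by
    have := hγle 0 h01 t ht ht.1
    rwa [hγ0] at this
  refine ⟨γ t, ?_, hxz⟩
  have hub : ∀ y' ∈ C, gh.d (γ t) y' ≤ r := by
    intro y' hy'
    rcases (gh.d_nonneg (γ t) y').lt_or_eq with hpos | heq
    · have hlezy' : gh.le (γ t) y' := gh.ll_imp_le ((gh.d_pos_iff _ _).1 hpos)
      have htri := gh.rev_triangle hlexz hlezy'
      have hle2 : gh.d x y' ≤ gh.d x y₀ := hmax y' hy'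
      rw [← hy₀eq] at hle2
      linarith
    · rw [← heq]; exact hr.le
  show sSup ((fun y => gh.d (γ t) y) '' C) = r
  have hmem : r ∈ (fun y => gh.d (γ t) y) '' C := ⟨y₀, hy₀C, hft⟩
  refine le_antisymm (csSup_le ⟨r, hmem⟩ ?_) (le_csSup ⟨r, ?_⟩ hmem)
  · rintro v ⟨y', hy', rfl⟩
    exact hub y' hy'
  · rintro v ⟨y', hy', rfl⟩
    exact hub y' hy'

end Helpers
lemma sphere_add (gh : GloballyHyperbolic M) (C : Set M)
    (hC : gh.toSpacetime.PastCausallyComplete C) (r a : ℝ) (hr : 0 < r) (ha : 0 < a) :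
    pastSphere gh.d a (pastSphere gh.d r C) = pastSphere gh.d (r + a) C := by
  ext x
  simp only [pastSphere, Set.mem_setOf_eq]
  constructor
  · -- d(x, S⁻_r(C)) = a  →  d(x,C) = r + a
    intro hx
    have hx' : sSup ((fun w => gh.d x w) '' pastSphere gh.d r C) = a := hx
    obtain ⟨hneS, hbddS⟩ := sSup_ne_zero_aux hx' ha.ne'
    obtain ⟨v, hv, hvpos⟩ := exists_lt_of_lt_csSup hneS (by rw [hx']; exact ha)
    obtain ⟨w, hwS, rfl⟩ := hv
    -- get a witness point of C causally after x
    have hw' : sSup ((fun y => gh.d w y) '' C) = r := hwS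
    obtain ⟨hneC', _⟩ := sSup_ne_zero_aux hw' hr.ne'
    obtain ⟨v, hv, hvpos'⟩ := exists_lt_of_lt_csSup hneC' (by rw [hw']; exact hr)
    obtain ⟨y, hyC, rfl⟩ := hv
    have hlexy : gh.le x y :=
      gh.le_trans (gh.ll_imp_le ((gh.d_pos_iff x w).1 hvpos))
        (gh.ll_imp_le ((gh.d_pos_iff w y).1 hvpos'))
    obtain ⟨y₀, hy₀C, hmax⟩ := exists_dist_max gh hC hyC hlexy
    have hseq : distTo gh.d x C = sSup ((fun y => gh.d x y) '' C) := rfl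
    have hbddC : BddAbove ((fun y => gh.d x y) '' C) := by
      refine ⟨gh.d x y₀, ?_⟩
      rintro v ⟨z, hzC, rfl⟩
      exact hmax z hzC
    have hneC : ((fun y => gh.d x y) '' C).Nonempty := ⟨gh.d x y, ⟨y, hyC, rfl⟩⟩
    have hy₀eq : distTo gh.d x C = gh.d x y₀ := by
      rw [hseq]
      refine le_antisymm (csSup_le hneC ?_) (le_csSup hbddC ⟨y₀, hy₀C, rfl⟩)
      rintro v ⟨z, hzC, rfl⟩
      exact hmax z hzC
    have hBmax : ∀ y' ∈ C, gh.d x y' ≤ distTo gh.d x C := by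
      intro y' hy'; rw [hy₀eq]; exact hmax y' hy'
    -- lower bound:  d x w' + r ≤ distTo for positive w' in the sphere
    have hrles : r ≤ distTo gh.d x C := by
      have := chain_bound gh hr hwS hvpos hBmax
      have := gh.d_nonneg x w
      linarith
    have hub : ∀ v ∈ (fun w => gh.d x w) '' pastSphere gh.d r C,
        v ≤ distTo gh.d x C - r := by
      rintro v ⟨w', hw'S, rfl⟩
      show gh.d x w' ≤ distTo gh.d x C - r
      rcases (gh.d_nonneg x w').lt_or_eq with hpos | heq
      · have := chain_bound gh hr hw'S hpos hBmax
        linarith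
      · rw [← heq]; linarith
    have hales : a ≤ distTo gh.d x C - r := by
      rw [← hx']
      exact csSup_le hneS hub
    obtain ⟨z, hzS, hxz⟩ := step_down gh hC hr hrles
    have hzle : gh.d x z ≤ a := by
      rw [← hx']
      exact le_csSup hbddS ⟨z, hzS, rfl⟩
    show distTo gh.d x C = r + a
    rw [hxz] at hzle
    linarith
  · -- d(x,C) = r + a  →  d(x, S⁻_r(C)) = a
    intro hx
    have hx' : sSup ((fun y => gh.d x y) '' C) = r + a := hx
    have hra : (0:ℝ) < r + a := by linarith
    obtain ⟨hneC, hbddC⟩ := sSup_ne_zero_aux hx' hra.ne'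
    have hB : ∀ y ∈ C, gh.d x y ≤ r + a := by
      intro y hy
      rw [← hx']
      exact le_csSup hbddC ⟨y, hy, rfl⟩
    have hrles : r ≤ distTo gh.d x C := by
      show r ≤ sSup ((fun y => gh.d x y) '' C); rw [hx']; linarith
    obtain ⟨z, hzS, hxz⟩ := step_down gh hC hr hrles
    have hxz' : gh.d x z = a := by
      have : distTo gh.d x C = r + a := hx
      rw [this] at hxz; linarith
    have hub : ∀ w ∈ pastSphere gh.d r C, gh.d x w ≤ a := by
      intro w hwS
      rcases (gh.d_nonneg x w).lt_or_eq with hpos | heq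
      · have := chain_bound gh hr hwS hpos hB
        linarith
      · rw [← heq]; exact ha.le
    show sSup ((fun w => gh.d x w) '' pastSphere gh.d r C) = a
    have hmem : a ∈ (fun w => gh.d x w) '' pastSphere gh.d r C := ⟨z, hzS, hxz'⟩
    refine le_antisymm (csSup_le ⟨a, hmem⟩ ?_) (le_csSup ⟨a, ?_⟩ hmem)
    · rintro v ⟨w, hwS, rfl⟩; exact hub w hwS
    · rintro v ⟨w, hwS, rfl⟩; exact hub w hwS
/-- Additivity of past sphere radii:
`S⁻_a(S⁻_r(C)) = S⁻_{r+a}(C)`, and `d(S⁻_s(C), S⁻_r(C)) = s − r` for `s > r`. -/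
theorem pastSphere_additivity
    {M : Type*} [TopologicalSpace M] (gh : GloballyHyperbolic M)
    (C : Set M) (hC : gh.toSpacetime.PastCausallyComplete C) :
    (∀ r a : ℝ, 0 < r → 0 < a →
      pastSphere gh.d a (pastSphere gh.d r C) = pastSphere gh.d (r + a) C) ∧
    (∀ s r : ℝ, 0 < r → r < s → (pastSphere gh.d s C).Nonempty →
      distBetween gh.d (pastSphere gh.d s C) (pastSphere gh.d r C) = s - r) := by
  refine ⟨fun r a hr ha => sphere_add gh C hC r a hr ha, ?_⟩
  intro s r hr hrs hneA
  have h1 := sphere_add gh C hC r (s - r) hr (by linarith)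
  rw [show r + (s - r) = s by ring] at h1
  obtain ⟨x, hxA⟩ := hneA
  have hsr : (0:ℝ) < s - r := by linarith
  have hx : sSup ((fun w => gh.d x w) '' pastSphere gh.d r C) = s - r := by
    rw [← h1] at hxA; exact hxA
  obtain ⟨hneB', hbddx⟩ := sSup_ne_zero_aux hx hsr.ne'
  obtain ⟨w0, hw0B⟩ : (pastSphere gh.d r C).Nonempty := hneB'.of_image
  have hub : ∀ v ∈ Set.image2 gh.d (pastSphere gh.d s C) (pastSphere gh.d r C),
      v ≤ s - r := by
    rintro v ⟨x', hx'A, w, hwB, rfl⟩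
    have hx'' : sSup ((fun w => gh.d x' w) '' pastSphere gh.d r C) = s - r := by
      rw [← h1] at hx'A; exact hx'A
    obtain ⟨_, hbdd'⟩ := sSup_ne_zero_aux hx'' hsr.ne'
    rw [← hx'']
    exact le_csSup hbdd' ⟨w, hwB, rfl⟩
  have hneI : (Set.image2 gh.d (pastSphere gh.d s C) (pastSphere gh.d r C)).Nonempty :=
    ⟨gh.d x w0, x, hxA, w0, hw0B, rfl⟩
  have hbddI : BddAbove (Set.image2 gh.d (pastSphere gh.d s C) (pastSphere gh.d r C)) :=
    ⟨s - r, fun v hv => hub v hv⟩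
  show sSup (Set.image2 gh.d (pastSphere gh.d s C) (pastSphere gh.d r C)) = s - r
  refine le_antisymm (csSup_le hneI hub) ?_
  by_contra hlt
  push_neg at hlt
  obtain ⟨v, hv, hgt⟩ := exists_lt_of_lt_csSup hneB' (by rw [hx]; exact hlt)
  obtain ⟨w, hwB, rfl⟩ := hv
  exact absurd (le_csSup hbddI ⟨x, hxA, w, hwB, rfl⟩) (not_le.mpr hgt)
end

section
/- Let M be a future timelike geodesically complete spacetime with compact Cauchy surface S, and suppose γ is a future timelike S-ray with S ⊆ I⁻(γ). Then the max-min condition holds on S: there exists R ≥ 0 such that k − min_{x∈S} d(x, S⁺_k(S)) ≤ R for all k, i.e., max_{x∈S} d(x, S⁺_k(S)) − min_{x∈S} d(x, S⁺_k(S)) ≤ R. -/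
open Set Filter Topology

variable {M : Type*} [TopologicalSpace M]

/-- If `γ` is a future timelike `S`-ray from a compact Cauchy
surface `S` with `S ⊆ I⁻(γ)` (in a future timelike geodesically complete
spacetime), then the max-min condition holds on `S`. -/
theorem Sray_condition_implies_maxmin
    {M : Type*} [TopologicalSpace M] (gh : GloballyHyperbolic M)
    (hcomp : gh.toSpacetime.FutureTimelikeComplete)
    (S : Set M) (hScomp : IsCompact S) (hSCau : gh.toSpacetime.IsCauchySurface S)
    (γ : ℝ → M) (hγ : gh.IsUnitTimelikeSRay S γ)
    (hsub : S ⊆ {x | ∃ t ∈ Set.Ici (0:ℝ), gh.ll x (γ t)}) :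
    ∃ R : ℝ, 0 ≤ R ∧ ∀ k : ℕ,
      ((k : ℝ) + 1 -
        sInf ((fun x => distTo gh.d x (futureSphere gh.d ((k : ℝ) + 1) S)) '' S) ≤ R) ∧
      (sSup ((fun x => distTo gh.d x (futureSphere gh.d ((k : ℝ) + 1) S)) '' S) -
        sInf ((fun x => distTo gh.d x (futureSphere gh.d ((k : ℝ) + 1) S)) '' S) ≤ R) := by
  obtain ⟨hγ0, hcont, hll, hspeed, hdist, hinext⟩ := hγ
  have hSne : S.Nonempty := ⟨γ 0, hγ0⟩
  have hγle : ∀ a b : ℝ, 0 ≤ a → a ≤ b → gh.le (γ a) (γ b) := by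
    intro a b ha hab
    rcases eq_or_lt_of_le hab with h | h
    · rw [h]; exact gh.le_refl _
    · exact gh.ll_imp_le (hll a ha b (ha.trans hab) h)
  -- find a single t₀ with S ⊆ J⁻(γ t₀)
  have hcover : S ⊆ ⋃ t : ℝ, {x | gh.ll x (γ (max t 0))} := by
    intro x hx
    obtain ⟨t, ht, hxt⟩ := hsub hx
    exact Set.mem_iUnion.2 ⟨t, by simpa [max_eq_left (Set.mem_Ici.1 ht)] using hxt⟩
  have hopen : ∀ t : ℝ, IsOpen {x | gh.ll x (γ (max t 0))} := by
    intro t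
    have : {x | gh.ll x (γ (max t 0))}
        = (fun x => (x, γ (max t 0))) ⁻¹' {p : M × M | gh.ll p.1 p.2} := rfl
    rw [this]
    exact gh.isOpen_ll.preimage (continuous_id.prodMk continuous_const)
  obtain ⟨s, hs⟩ := hScomp.elim_finite_subcover _ hopen hcover
  have hsne : s.Nonempty := by
    rcases Set.mem_iUnion₂.1 (hs hγ0) with ⟨t, ht, _⟩
    exact ⟨t, ht⟩
  set t₀ : ℝ := s.sup' hsne (fun t => max t 0) with ht₀def
  have ht₀0 : 0 ≤ t₀ := by
    obtain ⟨t, ht⟩ := hsne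
    exact le_trans (le_max_right t 0) (Finset.le_sup' (fun t => max t 0) ht)
  have hle : ∀ x ∈ S, gh.le x (γ t₀) := by
    intro x hx
    rcases Set.mem_iUnion₂.1 (hs hx) with ⟨t, hts, hxt⟩
    exact gh.le_trans (gh.ll_imp_le hxt)
      (hγle _ _ (le_max_right t 0) (Finset.le_sup' (fun t => max t 0) hts))
  have hbdd : ∀ y : M, BddAbove ((fun x => gh.d x y) '' S) := fun y =>
    (hScomp.image (gh.d_cont.comp (continuous_id.prodMk continuous_const))).bddAbove
  refine ⟨t₀, ht₀0, fun k => ?_⟩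
  set K : ℝ := (k : ℝ) + 1 with hKdef
  have hK0 : (0 : ℝ) ≤ K := by positivity
  have hmem : γ K ∈ futureSphere gh.d K S := by
    show distFrom gh.d S (γ K) = K
    rw [hdist K hK0, hspeed 0 Set.self_mem_Ici K hK0 hK0]
    ring
  have hC : ∀ x ∈ S, ∀ y ∈ futureSphere gh.d K S, gh.d x y ≤ K := by
    intro x hx y hy
    have h1 : gh.d x y ≤ distFrom gh.d S y := le_csSup (hbdd y) ⟨x, hx, rfl⟩
    rwa [hy] at h1
  have hfub : ∀ x ∈ S, distTo gh.d x (futureSphere gh.d K S) ≤ K := by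
    intro x hx
    apply Real.sSup_le _ hK0
    rintro z ⟨y, hy, rfl⟩
    exact hC x hx y hy
  have hflb : ∀ x ∈ S, K - t₀ ≤ distTo gh.d x (futureSphere gh.d K S) := by
    intro x hx
    have hb : BddAbove ((fun y => gh.d x y) '' futureSphere gh.d K S) := by
      refine ⟨K, ?_⟩
      rintro z ⟨y, hy, rfl⟩
      exact hC x hx y hy
    have h1 : gh.d x (γ K) ≤ distTo gh.d x (futureSphere gh.d K S) :=
      le_csSup hb ⟨γ K, hmem, rfl⟩
    have h2 : K - t₀ ≤ gh.d x (γ K) := by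
      rcases le_or_gt t₀ K with h | h
      · have h3 := gh.rev_triangle (hle x hx) (hγle t₀ K ht₀0 h)
        have h4 : gh.d (γ t₀) (γ K) = K - t₀ := hspeed t₀ ht₀0 K hK0 h
        have h5 := gh.d_nonneg x (γ t₀)
        linarith
      · have := gh.d_nonneg x (γ K)
        linarith
    linarith
  have hinf : K - t₀ ≤
      sInf ((fun x => distTo gh.d x (futureSphere gh.d K S)) '' S) := by
    refine le_csInf (hSne.image _) ?_
    rintro z ⟨x, hx, rfl⟩
    exact hflb x hx
  have hsup : sSup ((fun x => distTo gh.d x (futureSphere gh.d K S)) '' S) ≤ K := by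
    apply Real.sSup_le _ hK0
    rintro z ⟨x, hx, rfl⟩
    exact hfub x hx
  have hinfsup : sInf ((fun x => distTo gh.d x (futureSphere gh.d K S)) '' S) ≤ K := by
    refine le_trans (csInf_le ?_ ⟨γ 0, hγ0, rfl⟩) (hfub _ hγ0)
    refine ⟨0, ?_⟩
    rintro z ⟨x, hx, rfl⟩
    exact Real.sSup_nonneg (by rintro z ⟨y, hy, rfl⟩; exact gh.d_nonneg x y)
  constructor
  · linarith
  · linarith
end
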